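/- Let d ≥ 1 and let A be the (d+1)×(d+1) matrix with rows and columns indexed by 0,…,d, with A_{k,k+1} = d−k, A_{k,k−1} = −k, and all other entries 0. Let s ∈ ℚ^{d+1} be defined for even d by s_k = C(d/2, k/2)/C(d, k) if k is even and s_k = 0 if k is odd. Then A·s = 0. -/

import Mathlib

theorem stmt11 (d : ℕ) (hd : Even d) (hpos : 1 ≤ d) :
    (Matrix.of (fun k l : Fin (d + 1) =>
        if (l : ℕ) = (k : ℕ) + 1 then ((d : ℚ) - (k : ℕ))
        else if (l : ℕ) + 1 = (k : ℕ) then -((k : ℕ) : ℚ)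
        else 0)).mulVec
      (fun k : Fin (d + 1) =>
        if Even (k : ℕ) then ((d / 2).choose ((k : ℕ) / 2) : ℚ) / (d.choose (k : ℕ) : ℚ)
        else 0) = 0 := by
  funext k
  simp only [Matrix.mulVec, dotProduct, Matrix.of_apply, Pi.zero_apply]
  rcases Nat.even_or_odd (k : ℕ) with hk | hk
  · apply Finset.sum_eq_zero
    intro l _
    rcases Nat.even_or_odd (l : ℕ) with hl | hl
    · have h1 : ¬ ((l : ℕ) = (k : ℕ) + 1) := by
        rcases hk with ⟨r, hr⟩; rcases hl with ⟨s, hs⟩; omega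
      have h2 : ¬ ((l : ℕ) + 1 = (k : ℕ)) := by
        rcases hk with ⟨r, hr⟩; rcases hl with ⟨s, hs⟩; omega
      simp [h1, h2]
    · have : ¬ Even (l : ℕ) := Nat.not_even_iff_odd.mpr hl
      simp [this]
  · -- k odd
    rcases hk with ⟨j, hj⟩
    obtain ⟨m, hm⟩ := hd
    have hm2 : d = 2 * m := by omega
    have hkd : (k : ℕ) < d := by
      have := k.isLt; omega
    have hk1 : 1 ≤ (k : ℕ) := by omega
    set a : Fin (d+1) := ⟨(k : ℕ) + 1, by omega⟩ with ha
    set b : Fin (d+1) := ⟨(k : ℕ) - 1, by omega⟩ with hb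
    have hab : a ≠ b := by
      intro h; rw [Fin.ext_iff] at h; simp [ha, hb] at h; omega
    have key : ∀ l : Fin (d+1),
        (if (l : ℕ) = (k : ℕ) + 1 then ((d : ℚ) - (k : ℕ))
          else if (l : ℕ) + 1 = (k : ℕ) then -((k : ℕ) : ℚ) else 0) *
        (if Even (l : ℕ) then ((d / 2).choose ((l : ℕ) / 2) : ℚ) / (d.choose (l : ℕ) : ℚ) else 0)
        = (if l = a then ((d : ℚ) - (k : ℕ)) * (((d / 2).choose (((k:ℕ)+1) / 2) : ℚ) / (d.choose ((k:ℕ)+1) : ℚ)) else 0)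
          + (if l = b then (-((k : ℕ) : ℚ)) * (((d / 2).choose (((k:ℕ)-1) / 2) : ℚ) / (d.choose ((k:ℕ)-1) : ℚ)) else 0) := by
      intro l
      by_cases h1 : (l : ℕ) = (k : ℕ) + 1
      · have hla : l = a := by apply Fin.ext; simpa using h1
        have he : Even ((k : ℕ) + 1) := ⟨j+1, by omega⟩
        simp [hla, hab, h1, he, show (a : ℕ) = (k : ℕ) + 1 from rfl]
      · by_cases h2 : (l : ℕ) + 1 = (k : ℕ)
        · have hl1 : (l : ℕ) = (k : ℕ) - 1 := by omega
          have hlb : l = b := by apply Fin.ext; simp [hb, hl1]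
          have he : Even ((l : ℕ)) := ⟨j, by omega⟩
          have hla : l ≠ b → False := fun h => h hlb
          rw [if_neg h1, if_pos h2, if_pos he, if_neg (hlb ▸ hab.symm), if_pos hlb, hl1]
          ring
        · have hla : l ≠ a := by intro h; rw [Fin.ext_iff] at h; simp [ha] at h; omega
          have hlb : l ≠ b := by intro h; rw [Fin.ext_iff] at h; simp [hb] at h; omega
          simp [hla, hlb, h1, h2]
    rw [Finset.sum_congr rfl (fun l _ => key l), Finset.sum_add_distrib,
      Finset.sum_ite_eq' Finset.univ a, Finset.sum_ite_eq' Finset.univ b]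
    simp only [Finset.mem_univ, if_true]
    -- arithmetic
    rw [hj]
    have hk1' : (2*j+1 + 1) / 2 = j + 1 := by omega
    have hk2' : (2*j+1 - 1) / 2 = j := by omega
    have hd2 : d / 2 = m := by omega
    have hi1 : 2*j+1+1 = 2*j+2 := by omega
    have hi2 : 2*j+1-1 = 2*j := by omega
    rw [hk1', hk2', hd2, hi1, hi2]
    have hjm : j + 1 ≤ m := by omega
    have c0 : (0:ℚ) < d.choose (2*j) := by exact_mod_cast Nat.choose_pos (by omega)
    have c1 : (0:ℚ) < d.choose (2*j+1) := by exact_mod_cast Nat.choose_pos (by omega)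
    have c2 : (0:ℚ) < d.choose (2*j+2) := by exact_mod_cast Nat.choose_pos (by omega)
    have e1 : (m.choose (j+1) : ℚ) * (j+1) = m.choose j * ((m:ℚ) - j) := by
      have h := Nat.choose_succ_right_eq m j
      qify [show j ≤ m by omega] at h
      linarith [h]
    have e2 : (d.choose (2*j+1) : ℚ) * (2*j+1) = d.choose (2*j) * ((d:ℚ) - 2*j) := by
      have h := Nat.choose_succ_right_eq d (2*j)
      qify [show 2*j ≤ d by omega] at h
      push_cast at h ⊢
      linarith [h]
    have e3 : (d.choose (2*j+2) : ℚ) * (2*j+2) = d.choose (2*j+1) * ((d:ℚ) - (2*j+1)) := by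
      have h := Nat.choose_succ_right_eq d (2*j+1)
      qify [show 2*j+1 ≤ d by omega] at h
      push_cast at h ⊢
      linarith [h]
    have hdq : (d:ℚ) = 2*m := by exact_mod_cast congrArg (Nat.cast : ℕ → ℚ) hm2
    push_cast
    field_simp
    have E : (((d:ℚ)-2*j-1) * (m.choose (j+1) : ℚ) * (d.choose (2*j) : ℚ)) * (((j:ℚ)+1)*(2*(j:ℚ)+2))
        = ((2*(j:ℚ)+1) * (m.choose j : ℚ) * (d.choose (2*j+2) : ℚ)) * (((j:ℚ)+1)*(2*(j:ℚ)+2)) := by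
      linear_combination (((d:ℚ)-2*j-1) * (d.choose (2*j) : ℚ) * (2*(j:ℚ)+2)) * e1
        - (((d:ℚ)-2*j-1) * (m.choose j : ℚ) * ((j:ℚ)+1)) * e2
        - ((2*(j:ℚ)+1) * (m.choose j : ℚ) * ((j:ℚ)+1)) * e3
        - (((d:ℚ)-2*j-1) * (m.choose j : ℚ) * (d.choose (2*j) : ℚ) * ((j:ℚ)+1)) * hdq
    have hne : (((j:ℚ)+1)*(2*(j:ℚ)+2)) ≠ 0 := by positivity
    have E' := mul_right_cancel₀ hne E
    linear_combination E'
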